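/- Let ψ : Nat.Partrec.Code → Prop be a functional property captured by a language L that is computably succinct for ψ: there is a computable function f : ℕ → ℕ such that for every code g with ψ g there is g' ∈ L with eval g' = eval g and Encodable.encode g' ≤ f (Encodable.encode g). Then ψ is Π⁰₂: there exists a decidable relation R (ComputablePred on Nat.Partrec.Code × ℕ × ℕ) such that for every code g, ψ g ↔ ∀ a : ℕ, ∃ b : ℕ, R (g, a, b). -/

import Mathlib

open Nat.Partrec (Code)
open Nat.Partrec.Code Encodable Denumerable

namespace Pi02Aux

/-- one-sided agreement check -/
def chk (c d : Code) (x b : ℕ) : Bool :=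
  match evaln x.unpair.2 c x.unpair.1 with
  | none => true
  | some v => decide (evaln b d x.unpair.1 = some v)

def agreeB (c d : Code) (x b : ℕ) : Bool := chk c d x b && chk d c x b

def checkB (fL : Code → Bool) (p : Code × ℕ × ℕ) (e : ℕ) : Bool :=
  match (decode e : Option Code) with
  | none => false
  | some c => fL c && agreeB c p.1 ((ofNat (List ℕ) p.2.1).getD e 0)
      ((ofNat (List ℕ) p.2.2).getD e 0)

def natAny (c : ℕ → Bool) : ℕ → Bool
  | 0 => false
  | (k+1) => natAny c k || c k

theorem natAny_iff (c : ℕ → Bool) (k : ℕ) : natAny c k = true ↔ ∃ e < k, c e = true := by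
  induction k with
  | zero => simp [natAny]
  | succ k ih =>
    simp only [natAny, Bool.or_eq_true, ih]
    constructor
    · rintro (⟨e, he, hc⟩ | hc)
      · exact ⟨e, Nat.lt_succ_of_lt he, hc⟩
      · exact ⟨k, Nat.lt_succ_self _, hc⟩
    · rintro ⟨e, he, hc⟩
      rcases Nat.lt_succ_iff_lt_or_eq.1 he with h | rfl
      · exact Or.inl ⟨e, h, hc⟩
      · exact Or.inr hc

def rB (fL : Code → Bool) (fN : ℕ → ℕ) (p : Code × ℕ × ℕ) : Bool :=
  natAny (checkB fL p) (fN (encode p.1) + 1)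

theorem chk_prim : Primrec fun q : (Code × Code) × ℕ × ℕ => chk q.1.1 q.1.2 q.2.1 q.2.2 := by
  have hn : Primrec fun q : (Code × Code) × ℕ × ℕ => q.2.1.unpair.1 :=
    Primrec.fst.comp (Primrec.unpair.comp (Primrec.fst.comp Primrec.snd))
  have hs : Primrec fun q : (Code × Code) × ℕ × ℕ => q.2.1.unpair.2 :=
    Primrec.snd.comp (Primrec.unpair.comp (Primrec.fst.comp Primrec.snd))
  have ho : Primrec fun q : (Code × Code) × ℕ × ℕ => evaln q.2.1.unpair.2 q.1.1 q.2.1.unpair.1 :=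
    primrec_evaln.comp ((hs.pair (Primrec.fst.comp Primrec.fst)).pair hn)
  have hg : Primrec₂ fun (q : (Code × Code) × ℕ × ℕ) (v : ℕ) =>
      decide (evaln q.2.2 q.1.2 q.2.1.unpair.1 = some v) := by
    have he : Primrec fun q : ((Code × Code) × ℕ × ℕ) × ℕ =>
        evaln q.1.2.2 q.1.1.2 q.1.2.1.unpair.1 :=
      primrec_evaln.comp (((Primrec.snd.comp (Primrec.snd.comp Primrec.fst)).pair
        (Primrec.snd.comp (Primrec.fst.comp Primrec.fst))).pair
        (Primrec.fst.comp (Primrec.unpair.comp (Primrec.fst.comp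
          (Primrec.snd.comp Primrec.fst)))))
    exact (Primrec.eq.comp he (Primrec.option_some.comp Primrec.snd)).decide
  exact (Primrec.option_casesOn ho (Primrec.const true) hg).of_eq fun q => by
    unfold chk; cases evaln q.2.1.unpair.2 q.1.1 q.2.1.unpair.1 <;> rfl

theorem agreeB_prim : Primrec fun q : (Code × Code) × ℕ × ℕ => agreeB q.1.1 q.1.2 q.2.1 q.2.2 := by
  have h2 : Primrec fun q : (Code × Code) × ℕ × ℕ => chk q.1.2 q.1.1 q.2.1 q.2.2 :=
    chk_prim.comp (((Primrec.snd.comp Primrec.fst).pair (Primrec.fst.comp Primrec.fst)).pair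
      Primrec.snd)
  exact (Primrec.dom_bool₂ (· && ·)).comp chk_prim h2

theorem checkB_comp {fL : Code → Bool} (hfL : Computable fL) :
    Computable₂ (checkB fL) := by
  have hdec : Computable fun q : (Code × ℕ × ℕ) × ℕ => (decode q.2 : Option Code) :=
    Computable.decode.comp Computable.snd
  have hxa : Primrec fun q : (Code × ℕ × ℕ) × ℕ => (ofNat (List ℕ) q.1.2.1).getD q.2 0 :=
    (Primrec.list_getD 0).comp ((Primrec.ofNat (List ℕ)).comp
      (Primrec.fst.comp (Primrec.snd.comp Primrec.fst))) Primrec.snd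
  have hxb : Primrec fun q : (Code × ℕ × ℕ) × ℕ => (ofNat (List ℕ) q.1.2.2).getD q.2 0 :=
    (Primrec.list_getD 0).comp ((Primrec.ofNat (List ℕ)).comp
      (Primrec.snd.comp (Primrec.snd.comp Primrec.fst))) Primrec.snd
  have hg : Computable₂ fun (q : (Code × ℕ × ℕ) × ℕ) (c : Code) =>
      fL c && agreeB c q.1.1 ((ofNat (List ℕ) q.1.2.1).getD q.2 0)
        ((ofNat (List ℕ) q.1.2.2).getD q.2 0) := by
    have h1 : Computable fun r : ((Code × ℕ × ℕ) × ℕ) × Code => fL r.2 :=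
      hfL.comp Computable.snd
    have h2 : Computable fun r : ((Code × ℕ × ℕ) × ℕ) × Code =>
        agreeB r.2 r.1.1.1 ((ofNat (List ℕ) r.1.1.2.1).getD r.1.2 0)
          ((ofNat (List ℕ) r.1.1.2.2).getD r.1.2 0) :=
      (agreeB_prim.comp ((Primrec.snd.pair
        (Primrec.fst.comp (Primrec.fst.comp Primrec.fst))).pair
        ((hxa.comp Primrec.fst).pair (hxb.comp Primrec.fst)))).to_comp
    exact ((Primrec.dom_bool₂ (· && ·)).to_comp.comp h1 h2 : _)
  exact (Computable.option_casesOn hdec (Computable.const false) hg).of_eq fun q => by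
    simp only [checkB]
    cases (decode q.2 : Option Code) <;> rfl

theorem natAny_eq_rec (c : ℕ → Bool) : ∀ k, Nat.rec false (fun y IH => IH || c y) k = natAny c k
  | 0 => rfl
  | (k+1) => by simp only [natAny, natAny_eq_rec c k]

theorem rB_comp {fL : Code → Bool} (hfL : Computable fL) {fN : ℕ → ℕ} (hfN : Computable fN) :
    Computable (rB fL fN) := by
  have hN : Computable fun p : Code × ℕ × ℕ => fN (encode p.1) + 1 :=
    Computable.succ.comp (hfN.comp (Computable.encode.comp Computable.fst))
  have hh : Computable₂ fun (p : Code × ℕ × ℕ) (q : ℕ × Bool) => q.2 || checkB fL p q.1 :=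
    ((Primrec.dom_bool₂ (· || ·)).to_comp.comp
      (Computable.snd.comp Computable.snd)
      ((checkB_comp hfL).comp Computable.fst (Computable.fst.comp Computable.snd)) : _)
  exact (Computable.nat_rec hN (Computable.const false) hh).of_eq fun p => by
    simp only [rB, natAny_eq_rec, natAny]

theorem checkB_iff {fL : Code → Bool} {p : Code × ℕ × ℕ} {e : ℕ} :
    checkB fL p e = true ↔ ∃ c : Code, (decode e : Option Code) = some c ∧ fL c = true ∧
      agreeB c p.1 ((ofNat (List ℕ) p.2.1).getD e 0) ((ofNat (List ℕ) p.2.2).getD e 0) = true := by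
  unfold checkB
  cases h : (decode e : Option Code) <;> simp [h]

/-- agreement everywhere implies eval equality -/
theorem eval_eq_of_agree {c d : Code}
    (h : ∀ x, ∃ b, agreeB c d x b = true) : c.eval = d.eval := by
  funext n
  apply Part.ext
  intro v
  constructor
  · intro hv
    rcases evaln_complete.1 hv with ⟨s, hs⟩
    rcases h (Nat.pair n s) with ⟨b, hb⟩
    rcases (Bool.and_eq_true _ _).mp hb with ⟨h1, _⟩
    unfold chk at h1
    simp only [Nat.unpair_pair] at h1
    rw [Option.mem_def.1 hs] at h1
    simp only [decide_eq_true_eq] at h1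
    exact evaln_sound (Option.mem_def.2 h1)
  · intro hv
    rcases evaln_complete.1 hv with ⟨s, hs⟩
    rcases h (Nat.pair n s) with ⟨b, hb⟩
    rcases (Bool.and_eq_true _ _).mp hb with ⟨_, h2⟩
    unfold chk at h2
    simp only [Nat.unpair_pair] at h2
    rw [Option.mem_def.1 hs] at h2
    simp only [decide_eq_true_eq] at h2
    exact evaln_sound (Option.mem_def.2 h2)

/-- eval equality implies agreement at every x (choose b large enough) -/
theorem agree_of_eval_eq {c d : Code} (h : c.eval = d.eval) (x : ℕ) :
    ∃ b, agreeB c d x b = true := by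
  set n := x.unpair.1
  set s := x.unpair.2
  cases h1 : evaln s c n with
  | none =>
    cases h2 : evaln s d n with
    | none => exact ⟨0, by simp [agreeB, chk, show (Nat.unpair x).2 = s from rfl, show (Nat.unpair x).1 = n from rfl, h1, h2]⟩
    | some v =>
      have hv : v ∈ c.eval n := by rw [h]; exact evaln_sound (Option.mem_def.2 h2)
      rcases evaln_complete.1 hv with ⟨k, hk⟩
      exact ⟨k, by simp [agreeB, chk, show (Nat.unpair x).2 = s from rfl, show (Nat.unpair x).1 = n from rfl, h1, h2, Option.mem_def.1 hk]⟩
  | some v =>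
    have hv : v ∈ d.eval n := by rw [← h]; exact evaln_sound (Option.mem_def.2 h1)
    rcases evaln_complete.1 hv with ⟨k1, hk1⟩
    cases h2 : evaln s d n with
    | none => exact ⟨k1, by simp [agreeB, chk, show (Nat.unpair x).2 = s from rfl, show (Nat.unpair x).1 = n from rfl, h1, h2, Option.mem_def.1 hk1]⟩
    | some w =>
      have hw : w ∈ c.eval n := by rw [h]; exact evaln_sound (Option.mem_def.2 h2)
      rcases evaln_complete.1 hw with ⟨k2, hk2⟩
      refine ⟨max k1 k2, ?_⟩
      have e1 : evaln (max k1 k2) d n = some v :=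
        Option.mem_def.1 (evaln_mono (le_max_left _ _) hk1)
      have e2 : evaln (max k1 k2) c n = some w :=
        Option.mem_def.1 (evaln_mono (le_max_right _ _) hk2)
      simp [agreeB, chk, show (Nat.unpair x).2 = s from rfl, show (Nat.unpair x).1 = n from rfl, h1, h2, e1, e2]

theorem rB_iff {fL : Code → Bool} {fN : ℕ → ℕ} {p : Code × ℕ × ℕ} :
    rB fL fN p = true ↔ ∃ e < fN (encode p.1) + 1, checkB fL p e = true :=
  natAny_iff _ _

end Pi02Aux



theorem succinct_capture_pi02 (ψ : Nat.Partrec.Code → Prop)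
    (hfunc : ∀ c c' : Nat.Partrec.Code, c.eval = c'.eval → (ψ c ↔ ψ c'))
    (L : Set Nat.Partrec.Code) (hL : ComputablePred (· ∈ L))
    (hsound : ∀ c ∈ L, ψ c)
    (hcomplete : ∀ c : Nat.Partrec.Code, ψ c → ∃ c' ∈ L, c'.eval = c.eval)
    (f : ℕ → ℕ) (hf : Computable f)
    (hsucc : ∀ g : Nat.Partrec.Code, ψ g → ∃ g' ∈ L, g'.eval = g.eval ∧
      Encodable.encode g' ≤ f (Encodable.encode g)) :
    ∃ R : Nat.Partrec.Code × ℕ × ℕ → Prop, ComputablePred R ∧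
      ∀ g : Nat.Partrec.Code, ψ g ↔ ∀ a : ℕ, ∃ b : ℕ, R (g, a, b) := by
  classical
  obtain ⟨fL, hfLc, hpL⟩ := ComputablePred.computable_iff.1 hL
  have hmem : ∀ c : Code, c ∈ L ↔ fL c = true := fun c => by
    change (fun c => c ∈ L) c ↔ _; rw [hpL]
  refine ⟨fun p => Pi02Aux.rB fL f p = true,
    ComputablePred.computable_iff.2 ⟨_, Pi02Aux.rB_comp hfLc hf, rfl⟩, fun g => ?_⟩
  constructor
  · -- ψ g → ∀ a ∃ b
    intro hg a
    obtain ⟨g', hg'L, hev, hle⟩ := hsucc g hg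
    set e := encode g' with he
    obtain ⟨b0, hb0⟩ := Pi02Aux.agree_of_eval_eq hev ((ofNat (List ℕ) a).getD e 0)
    refine ⟨encode (List.replicate (e + 1) b0), ?_⟩
    show Pi02Aux.rB fL f _ = true
    rw [Pi02Aux.rB_iff]
    refine ⟨e, Nat.lt_succ_of_le hle, ?_⟩
    rw [Pi02Aux.checkB_iff]
    refine ⟨g', by simp [he, Encodable.encodek], (hmem g').1 hg'L, ?_⟩
    have hrep : (ofNat (List ℕ) (encode (List.replicate (e + 1) b0))).getD e 0 = b0 := by
      rw [Denumerable.ofNat_encode]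
      simp [List.getD_eq_getElem?_getD]
    simpa [hrep] using hb0
  · -- ∀ a ∃ b → ψ g
    intro h
    by_cases hgood : ∃ c ∈ L, c.eval = g.eval ∧ encode c ≤ f (encode g)
    · obtain ⟨c, hcL, hce, -⟩ := hgood
      exact (hfunc c g hce).1 (hsound c hcL)
    · exfalso
      have hbad : ∀ c : Code, c ∈ L → encode c ≤ f (encode g) →
          ∃ x, ∀ b, ¬ Pi02Aux.agreeB c g x b = true := by
        intro c hcL hle
        by_contra hcon
        push_neg at hcon
        exact hgood ⟨c, hcL, Pi02Aux.eval_eq_of_agree hcon, hle⟩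
      set xf : ℕ → ℕ := fun e =>
        if hx : ∃ x, ∀ b, ¬ Pi02Aux.agreeB (ofNat Code e) g x b = true then hx.choose else 0
        with hxf
      obtain ⟨b, hb⟩ := h (encode ((List.range (f (encode g) + 1)).map xf))
      replace hb : Pi02Aux.rB fL f (g, encode ((List.range (f (encode g) + 1)).map xf), b)
        = true := hb
      rw [Pi02Aux.rB_iff] at hb
      obtain ⟨e, helt, hce⟩ := hb
      rw [Pi02Aux.checkB_iff] at hce
      obtain ⟨c, hdec, hfLe, hag⟩ := hce
      have hc : c = ofNat Code e := by
        rw [Denumerable.decode_eq_ofNat] at hdec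
        exact (Option.some_injective _ hdec).symm
      have hcL : c ∈ L := (hmem c).2 hfLe
      have hele : encode c ≤ f (encode g) := by
        rw [hc, Denumerable.encode_ofNat]
        exact Nat.lt_succ_iff.1 helt
      have hEx : ∃ x, ∀ b, ¬ Pi02Aux.agreeB (ofNat Code e) g x b = true := by
        rw [← hc]; exact hbad c hcL hele
      have hget : (ofNat (List ℕ)
          (encode ((List.range (f (encode g) + 1)).map xf))).getD e 0 = xf e := by
        rw [Denumerable.ofNat_encode]
        simp [List.getD_eq_getElem?_getD, helt]
      rw [hget] at hag
      have hxe : xf e = hEx.choose := dif_pos hEx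
      rw [hc] at hag
      exact hEx.choose_spec _ (by rw [← hxe]; exact hag)
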